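/- The total mutual-visibility number of the d-dimensional butterfly equals μ_t(BF(d)) = 2^d, for all d ≥ 1. -/

import Mathlib

open SimpleGraph

/-- Two vertices are `X`-visible in `G`: some shortest path between them has
no internal vertex in `X`. -/
def IsVisiblePair {V : Type*} (G : SimpleGraph V) (X : Set V) (x y : V) : Prop :=
  ∃ p : G.Walk x y, p.IsPath ∧ p.length = G.dist x y ∧
    ∀ z ∈ p.support, z ∈ X → z = x ∨ z = y

/-- `X` is a mutual-visibility set of `G`. -/
def MutualVisSet {V : Type*} (G : SimpleGraph V) (X : Set V) : Prop :=
  ∀ x ∈ X, ∀ y ∈ X, IsVisiblePair G X x y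

/-- `X` is a total mutual-visibility set of `G`. -/
def TotalMutualVisSet {V : Type*} (G : SimpleGraph V) (X : Set V) : Prop :=
  ∀ x y : V, IsVisiblePair G X x y

/-- The mutual-visibility number `μ(G)`. -/
noncomputable def mutualVisNum {V : Type*} (G : SimpleGraph V) : ℕ :=
  sSup {n | ∃ X : Set V, MutualVisSet G X ∧ X.ncard = n}

/-- The total mutual-visibility number `μₜ(G)`. -/
noncomputable def totalMutualVisNum {V : Type*} (G : SimpleGraph V) : ℕ :=
  sSup {n | ∃ X : Set V, TotalMutualVisSet G X ∧ X.ncard = n}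

/-- A set of vertices is convex: every shortest path in `G` between two of its
vertices has all its vertices in the set. -/
def ConvexSet {V : Type*} (G : SimpleGraph V) (S : Set V) : Prop :=
  ∀ x ∈ S, ∀ y ∈ S, ∀ p : G.Walk x y, p.IsPath → p.length = G.dist x y →
    ∀ z ∈ p.support, z ∈ S

/-- The butterfly graph `BF(d)`: vertices `[ℓ, c]` with level `ℓ : Fin (d+1)`
and column `c : Fin d → Bool`; `[ℓ,c]` and `[ℓ+1,c']` are adjacent iff `c` and
`c'` agree on every bit other than bit `ℓ` (so `c = c'` or they differ exactly
in bit `ℓ`). -/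
def BF (d : ℕ) : SimpleGraph (Fin (d + 1) × (Fin d → Bool)) :=
  SimpleGraph.fromRel (fun u v =>
    (u.1 : ℕ) + 1 = (v.1 : ℕ) ∧ ∀ i : Fin d, (i : ℕ) ≠ (u.1 : ℕ) → u.2 i = v.2 i)

namespace BFaux
variable {e : ℕ}
abbrev V (e : ℕ) := Fin (e + 2) × (Fin (e + 1) → Bool)
def S (u v : V e) : Prop :=
  (u.1 : ℕ) + 1 = (v.1 : ℕ) ∧ ∀ i : Fin (e + 1), (i : ℕ) ≠ (u.1 : ℕ) → u.2 i = v.2 i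
lemma adj_iff {u v : V e} : (BF (e + 1)).Adj u v ↔ u ≠ v ∧ (S u v ∨ S v u) := by
  simp only [BF, fromRel_adj, S]
lemma adj_level {u v : V e} (h : (BF (e + 1)).Adj u v) :
    (u.1 : ℕ) + 1 = (v.1 : ℕ) ∨ (v.1 : ℕ) + 1 = (u.1 : ℕ) := by
  rcases (adj_iff.mp h).2 with h | h
  · exact Or.inl h.1
  · exact Or.inr h.1
lemma adj_of_S {u v : V e} (h : S u v) : (BF (e + 1)).Adj u v := by
  refine adj_iff.mpr ⟨?_, Or.inl h⟩
  intro hc; have := h.1; rw [hc] at this; omega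

/-- the extremal set -/
def Xset (e : ℕ) : Set (V e) :=
  {v | ((v.1 : ℕ) = 0 ∧ v.2 0 = false) ∨ ((v.1 : ℕ) = e + 1 ∧ v.2 (Fin.last e) = false)}

/-- modification map -/
noncomputable def m (v : V e) : V e :=
  if (v.1 : ℕ) = 0 then (v.1, Function.update v.2 0 true)
  else if (v.1 : ℕ) = e + 1 then (v.1, Function.update v.2 (Fin.last e) true)
  else v

lemma m_fst (v : V e) : (m v).1 = v.1 := by
  unfold m; split_ifs <;> rfl

lemma m_not_mem (v : V e) : m v ∉ Xset e := by
  unfold m Xset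
  split_ifs with h1 h2 <;> intro hc <;> simp only [Set.mem_setOf_eq] at hc
  · rcases hc with ⟨_, hb⟩ | ⟨hl, _⟩
    · simp [Function.update_self] at hb
    · omega
  · rcases hc with ⟨hl, _⟩ | ⟨_, hb⟩
    · omega
    · simp [Function.update_self] at hb
  · rcases hc with ⟨hl, _⟩ | ⟨hl, _⟩ <;> omega

lemma m_bits {b : ℕ} (hb : b ≤ e) (w : V e) (hw : (w.1 : ℕ) = b ∨ (w.1 : ℕ) = b + 1)
    (i : Fin (e + 1)) (hi : (i : ℕ) ≠ b) : (m w).2 i = w.2 i := by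
  unfold m
  split_ifs with h1 h2
  · have hb0 : b = 0 := by omega
    have : i ≠ 0 := by
      intro hc; apply hi; rw [hc, hb0]; rfl
    simp [Function.update_of_ne this]
  · have hbe : b = e := by omega
    have : i ≠ Fin.last e := by
      intro hc; apply hi; rw [hc, hbe]; rfl
    simp [Function.update_of_ne this]
  · rfl

lemma S_mm {u v : V e} (h : S u v) : S (m u) (m v) := by
  have hb : (u.1 : ℕ) ≤ e := by have := h.1; have := v.1.isLt; omega
  refine ⟨by rw [m_fst, m_fst]; exact h.1, ?_⟩
  intro i hi
  rw [m_fst] at hi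
  rw [m_bits hb u (Or.inl rfl) i hi, m_bits hb v (Or.inr h.1.symm) i hi]
  exact h.2 i hi

lemma S_id_m {u v : V e} (h : S u v) : S u (m v) := by
  have hb : (u.1 : ℕ) ≤ e := by have := h.1; have := v.1.isLt; omega
  refine ⟨by rw [m_fst]; exact h.1, ?_⟩
  intro i hi
  rw [m_bits hb v (Or.inr h.1.symm) i hi]
  exact h.2 i hi

lemma S_m_id {u v : V e} (h : S u v) : S (m u) v := by
  have hb : (u.1 : ℕ) ≤ e := by have := h.1; have := v.1.isLt; omega
  refine ⟨by rw [m_fst]; exact h.1, ?_⟩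
  intro i hi
  rw [m_fst] at hi
  rw [m_bits hb u (Or.inl rfl) i hi]
  exact h.2 i hi

lemma adj_mm {u v : V e} (h : (BF (e + 1)).Adj u v) : (BF (e + 1)).Adj (m u) (m v) := by
  rcases (adj_iff.mp h).2 with hs | hs
  · exact adj_of_S (S_mm hs)
  · exact (adj_of_S (S_mm hs)).symm

lemma adj_id_m {u v : V e} (h : (BF (e + 1)).Adj u v) : (BF (e + 1)).Adj u (m v) := by
  rcases (adj_iff.mp h).2 with hs | hs
  · exact adj_of_S (S_id_m hs)
  · exact (adj_of_S (S_m_id hs)).symm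

lemma adj_m_id {u v : V e} (h : (BF (e + 1)).Adj u v) : (BF (e + 1)).Adj (m u) v := by
  rcases (adj_iff.mp h).2 with hs | hs
  · exact adj_of_S (S_m_id hs)
  · exact (adj_of_S (S_id_m hs)).symm

/-- rewrite a walk, modifying its start by `m` and all interior vertices, keeping the end -/
noncomputable def gwalk : ∀ {u v w : V e}, (BF (e + 1)).Adj u v → (BF (e + 1)).Walk v w →
    (BF (e + 1)).Walk (m u) w
  | _, _, _, h, .nil => .cons (adj_m_id h) .nil
  | _, _, _, h, .cons h2 q => .cons (adj_mm h) (gwalk h2 q)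

/-- modify all interior vertices of a walk -/
noncomputable def fixw : ∀ {u v : V e}, (BF (e + 1)).Walk u v → (BF (e + 1)).Walk u v
  | _, _, .nil => .nil
  | _, _, .cons h .nil => .cons h .nil
  | _, _, .cons h (.cons h2 q) => .cons (adj_id_m h) (gwalk h2 q)

lemma gwalk_length : ∀ {u v w : V e} (h : (BF (e + 1)).Adj u v) (q : (BF (e + 1)).Walk v w),
    (gwalk h q).length = q.length + 1
  | _, _, _, h, .nil => by simp [gwalk]
  | _, _, _, h, .cons h2 q => by simp [gwalk, gwalk_length h2 q]

lemma fixw_length : ∀ {u v : V e} (p : (BF (e + 1)).Walk u v), (fixw p).length = p.length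
  | _, _, .nil => rfl
  | _, _, .cons h .nil => rfl
  | _, _, .cons h (.cons h2 q) => by
      simp [fixw, gwalk_length]

lemma gwalk_support : ∀ {u v w : V e} (h : (BF (e + 1)).Adj u v) (q : (BF (e + 1)).Walk v w),
    ∀ z ∈ (gwalk h q).support, z = w ∨ ∃ a, z = m a
  | _, _, _, h, .nil => by
      intro z hz
      simp only [gwalk, SimpleGraph.Walk.support_cons, SimpleGraph.Walk.support_nil,
        List.mem_cons, List.mem_singleton] at hz
      rcases hz with hz | hz | hz
      · exact Or.inr ⟨_, hz⟩
      · exact Or.inl hz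
      · exact absurd hz (by simp)
  | _, _, _, h, .cons h2 q => by
      intro z hz
      simp only [gwalk, SimpleGraph.Walk.support_cons, List.mem_cons] at hz
      rcases hz with hz | hz
      · exact Or.inr ⟨_, hz⟩
      · exact gwalk_support h2 q z hz

lemma fixw_support : ∀ {u v : V e} (p : (BF (e + 1)).Walk u v),
    ∀ z ∈ (fixw p).support, z = u ∨ z = v ∨ ∃ a, z = m a
  | _, _, .nil => by intro z hz; simp [fixw] at hz; exact Or.inl hz
  | _, _, .cons h .nil => by
      intro z hz; simp [fixw] at hz
      rcases hz with hz | hz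
      · exact Or.inl hz
      · exact Or.inr (Or.inl hz)
  | u, v, .cons h (.cons h2 q) => by
      intro z hz
      simp only [fixw, SimpleGraph.Walk.support_cons, List.mem_cons] at hz
      rcases hz with hz | hz
      · exact Or.inl hz
      · rcases gwalk_support h2 q z hz with hz | hz
        · exact Or.inr (Or.inl hz)
        · exact Or.inr (Or.inr hz)

lemma reach_down : ∀ (k : ℕ) (hk : k < e + 2) (c : Fin (e + 1) → Bool),
    (BF (e + 1)).Reachable (⟨k, hk⟩, c) ((0 : Fin (e + 2)), c) := by
  intro k
  induction k with
  | zero => intro hk c; exact Reachable.refl _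
  | succ n ih =>
      intro hk c
      have hadj : (BF (e + 1)).Adj (⟨n, by omega⟩, c) (⟨n + 1, hk⟩, c) :=
        adj_of_S ⟨by simp, fun i hi => rfl⟩
      exact hadj.symm.reachable.trans (ih (by omega) c)

lemma reach_up : ∀ (j : ℕ) (hj : j ≤ e + 1) (c c' : Fin (e + 1) → Bool),
    (∀ i : Fin (e + 1), (i : ℕ) < e + 1 - j → c i = c' i) →
    (BF (e + 1)).Reachable (⟨e + 1 - j, by omega⟩, c) (Fin.last (e + 1), c') := by
  intro j
  induction j with
  | zero =>
      intro hj c c' h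
      have hc : c = c' := funext fun i => h i (by omega)
      subst hc
      have : (⟨e + 1 - 0, by omega⟩ : Fin (e + 2)) = Fin.last (e + 1) := by
        simp [Fin.ext_iff]
      rw [this]
  | succ j ih =>
      intro hj c c' h
      set c'' : Fin (e + 1) → Bool := fun i => if (i : ℕ) < e + 1 - j then c' i else c i with hc''
      have hadj : (BF (e + 1)).Adj (⟨e + 1 - (j + 1), by omega⟩, c) (⟨e + 1 - j, by omega⟩, c'') := by
        refine adj_of_S ⟨by simp; omega, fun i hi => ?_⟩
        simp only [hc'']
        by_cases hlt : (i : ℕ) < e + 1 - j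
        · rw [if_pos hlt]
          refine h i ?_
          simp at hi
          omega
        · rw [if_neg hlt]
      refine hadj.reachable.trans (ih (by omega) c'' c' fun i hi => ?_)
      simp only [hc'', if_pos hi]

lemma reach_all (x y : V e) : (BF (e + 1)).Reachable x y := by
  have h1 : (BF (e + 1)).Reachable (⟨(x.1 : ℕ), x.1.isLt⟩, x.2) ((0 : Fin (e + 2)), x.2) :=
    reach_down _ _ _
  have hx : (⟨(x.1 : ℕ), x.1.isLt⟩, x.2) = x := by simp
  have h2 : (BF (e + 1)).Reachable (⟨e + 1 - (e + 1), by omega⟩, x.2) (Fin.last (e + 1), y.2) :=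
    reach_up (e + 1) le_rfl x.2 y.2 (fun i hi => by omega)
  have h0 : (⟨e + 1 - (e + 1), by omega⟩ : Fin (e + 2)) = (0 : Fin (e + 2)) := by
    simp [Fin.ext_iff]
  have h3 : (BF (e + 1)).Reachable (⟨(y.1 : ℕ), y.1.isLt⟩, y.2) ((0 : Fin (e + 2)), y.2) :=
    reach_down _ _ _
  have hy : (⟨(y.1 : ℕ), y.1.isLt⟩, y.2) = y := by simp
  have h4 : (BF (e + 1)).Reachable (⟨e + 1 - (e + 1), by omega⟩, y.2) (Fin.last (e + 1), y.2) :=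
    reach_up (e + 1) le_rfl y.2 y.2 (fun i hi => rfl)
  rw [hx] at h1
  rw [hy] at h3
  rw [h0] at h2 h4
  exact ((h1.trans h2).trans h4.symm).trans h3.symm

lemma tmvs_Xset : TotalMutualVisSet (BF (e + 1)) (Xset e) := by
  intro x y
  obtain ⟨p, hlen⟩ := (reach_all x y).exists_walk_length_eq_dist
  have hlen' : (fixw p).length = (BF (e + 1)).dist x y := by rw [fixw_length]; exact hlen
  refine ⟨fixw p, (fixw p).isPath_of_length_eq_dist hlen', hlen', ?_⟩
  intro z hz hzX
  rcases fixw_support p z hz with h | h | ⟨a, rfl⟩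
  · exact Or.inl h
  · exact Or.inr h
  · exact absurd hzX (m_not_mem a)

/-- columns with a fixed bit at `0` -/
lemma ncard_fixed0 : ({c : Fin (e + 1) → Bool | c 0 = false}).ncard = 2 ^ e := by
  have h : {c : Fin (e + 1) → Bool | c 0 = false} ≃ (Fin e → Bool) := by
    refine ⟨fun c => fun i => c.1 i.succ, fun g => ⟨Fin.cons false g, by simp⟩, ?_, ?_⟩
    · rintro ⟨c, hc⟩
      ext i
      simp only
      refine Fin.cases ?_ ?_ i
      · simp [hc.symm]
      · intro j; simp
    · intro g; ext i; simp
  rw [← Nat.card_coe_set_eq, Nat.card_congr h, Nat.card_eq_fintype_card]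
  simp [Fintype.card_fun]

lemma ncard_fixedlast : ({c : Fin (e + 1) → Bool | c (Fin.last e) = false}).ncard = 2 ^ e := by
  have h : {c : Fin (e + 1) → Bool | c (Fin.last e) = false} ≃ (Fin e → Bool) := by
    refine ⟨fun c => fun i => c.1 i.castSucc, fun g => ⟨Fin.snoc g false, by simp⟩, ?_, ?_⟩
    · rintro ⟨c, hc⟩
      ext i
      simp only
      refine Fin.lastCases ?_ ?_ i
      · simp [hc.symm]
      · intro j; simp
    · intro g; ext i; simp
  rw [← Nat.card_coe_set_eq, Nat.card_congr h, Nat.card_eq_fintype_card]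
  simp [Fintype.card_fun]

lemma ncard_Xset : (Xset e).ncard = 2 ^ (e + 1) := by
  have hX : Xset e =
      ((fun c => ((0 : Fin (e + 2)), c)) '' {c | c 0 = false}) ∪
      ((fun c => (Fin.last (e + 1), c)) '' {c | c (Fin.last e) = false}) := by
    ext v
    simp only [Xset, Set.mem_setOf_eq, Set.mem_union, Set.mem_image]
    constructor
    · rintro (⟨h1, h2⟩ | ⟨h1, h2⟩)
      · exact Or.inl ⟨v.2, h2, by rw [← v.eta]; congr 1; exact (Fin.ext h1).symm⟩
      · exact Or.inr ⟨v.2, h2, by rw [← v.eta]; congr 1; symm; exact Fin.ext h1⟩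
    · rintro (⟨c, hc, rfl⟩ | ⟨c, hc, rfl⟩)
      · exact Or.inl ⟨rfl, hc⟩
      · exact Or.inr ⟨by simp, hc⟩
  have hdis : Disjoint ((fun c => ((0 : Fin (e + 2)), c)) '' {c : Fin (e + 1) → Bool | c 0 = false})
      ((fun c => (Fin.last (e + 1), c)) '' {c : Fin (e + 1) → Bool | c (Fin.last e) = false}) := by
    rw [Set.disjoint_left]
    rintro v ⟨c, _, rfl⟩ ⟨c', _, hc'⟩
    have := congrArg (fun w => ((w.1 : ℕ))) hc'
    simp at this
  rw [hX, Set.ncard_union_eq hdis (Set.toFinite _) (Set.toFinite _),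
    Set.ncard_image_of_injective _ (by intro a b hab; simpa using hab),
    Set.ncard_image_of_injective _ (by intro a b hab; simpa using hab),
    ncard_fixed0, ncard_fixedlast]
  ring

lemma bool_eq_or (b b' : Bool) : b = b' ∨ b = !b' := by
  cases b <;> cases b' <;> simp

lemma dist_eq_two {x y v : V e} (h1 : (BF (e + 1)).Adj x v) (h2 : (BF (e + 1)).Adj v y)
    (hxy : x ≠ y) (hna : ¬ (BF (e + 1)).Adj x y) : (BF (e + 1)).dist x y = 2 := by
  have hle : (BF (e + 1)).dist x y ≤ 2 := by
    have := SimpleGraph.dist_le (Walk.cons h1 (Walk.cons h2 Walk.nil))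
    simpa using this
  have h0 : (BF (e + 1)).dist x y ≠ 0 :=
    SimpleGraph.dist_ne_zero_iff_ne_and_reachable.mpr
      ⟨hxy, (Walk.cons h1 (Walk.cons h2 Walk.nil)).reachable⟩
  have hone : (BF (e + 1)).dist x y ≠ 1 := fun hc =>
    hna (SimpleGraph.dist_eq_one_iff_adj.mp hc)
  omega

lemma exists_middle {Y : Set (V e)} (hY : TotalMutualVisSet (BF (e + 1)) Y) {x y : V e}
    (hd2 : (BF (e + 1)).dist x y = 2) :
    ∃ w : V e, (BF (e + 1)).Adj x w ∧ (BF (e + 1)).Adj w y ∧ (w ∈ Y → w = x ∨ w = y) := by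
  obtain ⟨p, hp, hlen, hsup⟩ := hY x y
  rw [hd2] at hlen
  cases p with
  | nil => simp at hlen
  | cons h q =>
    cases q with
    | nil => simp at hlen
    | cons h2 r =>
      cases r with
      | nil => exact ⟨_, h, h2, fun hw => hsup _ (by simp) hw⟩
      | cons h3 s => simp [Walk.length_cons] at hlen
set_option maxHeartbeats 2000000 in
lemma level_mem {Y : Set (V e)} (hY : TotalMutualVisSet (BF (e + 1)) Y) (v : V e) (hv : v ∈ Y) :
    (v.1 : ℕ) = 0 ∨ (v.1 : ℕ) = e + 1 := by
  by_contra hc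
  push_neg at hc
  obtain ⟨hc1, hc2⟩ := hc
  have hvlt : (v.1 : ℕ) < e + 2 := v.1.isLt
  set b : ℕ := (v.1 : ℕ) with hbdef
  have hb1 : 1 ≤ b := by omega
  have hb2 : b ≤ e := by omega
  set i1 : Fin (e + 1) := ⟨b - 1, by omega⟩ with hi1
  set i2 : Fin (e + 1) := ⟨b, by omega⟩ with hi2
  set x : V e := (⟨b - 1, by omega⟩, Function.update v.2 i1 (!v.2 i1)) with hx
  set y : V e := (⟨b + 1, by omega⟩, Function.update v.2 i2 (!v.2 i2)) with hy
  have h1 : (BF (e + 1)).Adj x v := by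
    refine adj_of_S ⟨by simp [hx]; omega, fun i hi => ?_⟩
    have : i ≠ i1 := by
      intro hh; rw [hh] at hi; simp [hx, hi1] at hi
    simp [hx, Function.update_of_ne this]
  have h2 : (BF (e + 1)).Adj v y := by
    refine adj_of_S ⟨by simp [hy, hbdef], fun i hi => ?_⟩
    have : i ≠ i2 := by
      intro hh; rw [hh] at hi; simp [hi2, hbdef] at hi
    simp [hy, Function.update_of_ne this]
  have hxy : x ≠ y := by
    intro hh
    have := congrArg (fun w => ((w.1 : ℕ))) hh
    simp [hx, hy] at this
  have hna : ¬ (BF (e + 1)).Adj x y := by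
    intro hh
    rcases adj_level hh with hl | hl <;> simp [hx, hy] at hl <;> omega
  obtain ⟨w, hw1, hw2, hwc⟩ := exists_middle hY (dist_eq_two h1 h2 hxy hna)
  -- the level of w is b
  have hwlev : (w.1 : ℕ) = b := by
    rcases adj_level hw1 with hl | hl <;> rcases adj_level hw2 with hl2 | hl2 <;>
      simp [hx, hy] at hl hl2 <;> omega
  -- bits of w
  have hSxw : S x w := by
    rcases (adj_iff.mp hw1).2 with hs | hs
    · exact hs
    · exfalso; have := hs.1; simp [hx] at this; omega
  have hSwy : S w y := by
    rcases (adj_iff.mp hw2).2 with hs | hs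
    · exact hs
    · exfalso; have := hs.1; simp [hy] at this; omega
  have hwcol : w.2 = v.2 := by
    funext i
    by_cases hib : (i : ℕ) = b - 1
    · have hi2' : (i : ℕ) ≠ (w.1 : ℕ) := by omega
      have := hSwy.2 i (by rw [hwlev]; omega)
      rw [this]
      have : i ≠ i2 := by intro hh; rw [hh] at hib; simp [hi2] at hib; omega
      simp [hy, Function.update_of_ne this]
    · have := hSxw.2 i (by simp [hx]; omega)
      have hxi : x.2 i = v.2 i := by
        have hne : i ≠ i1 := by intro hh; rw [hh] at hib; simp [hi1] at hib
        simp [hx, Function.update_of_ne hne]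
      rw [← this, hxi]
  have hwv : w = v := by
    refine Prod.ext ?_ hwcol
    exact Fin.ext (by rw [hwlev])
  rw [hwv] at hwc
  rcases hwc hv with hh | hh
  · have := congrArg (fun w => ((w.1 : ℕ))) hh
    simp [hx] at this
    omega
  · have := congrArg (fun w => ((w.1 : ℕ))) hh
    simp [hy, hbdef] at this
set_option maxHeartbeats 2000000 in
lemma pair0 {Y : Set (V e)} (hY : TotalMutualVisSet (BF (e + 1)) Y) (c : Fin (e + 1) → Bool)
    (h1 : ((0 : Fin (e + 2)), c) ∈ Y)
    (h2 : ((0 : Fin (e + 2)), Function.update c 0 (!c 0)) ∈ Y) : False := by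
  set c' : Fin (e + 1) → Bool := Function.update c 0 (!c 0) with hc'
  set x : V e := (⟨1, by omega⟩, c) with hx
  set y : V e := (⟨1, by omega⟩, c') with hy
  have hA1 : (BF (e + 1)).Adj ((0 : Fin (e + 2)), c) x :=
    adj_of_S ⟨by simp [hx], fun i hi => rfl⟩
  have hA2 : (BF (e + 1)).Adj ((0 : Fin (e + 2)), c) y := by
    refine adj_of_S ⟨by simp [hy], fun i hi => ?_⟩
    have hne : i ≠ 0 := by
      intro hh; rw [hh] at hi; simp at hi
    simp [hy, hc', Function.update_of_ne hne]
  have hxy : x ≠ y := by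
    intro hh
    have := congrArg (fun w => w.2 0) hh
    simp [hx, hy, hc', Function.update_self] at this
  have hna : ¬ (BF (e + 1)).Adj x y := by
    intro hh
    rcases adj_level hh with hl | hl <;> simp [hx, hy] at hl
  obtain ⟨w, hw1, hw2, hwc⟩ := exists_middle hY (dist_eq_two hA1.symm hA2 hxy hna)
  have hwlev : (w.1 : ℕ) = 0 ∨ (w.1 : ℕ) = 2 := by
    rcases adj_level hw1 with hl | hl <;> simp only [hx, Fin.val_mk] at hl <;> omega
  rcases hwlev with hwlev | hwlev
  · -- middle at level 0
    have hSwx : S w x := by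
      rcases (adj_iff.mp hw1).2 with hs | hs
      · exfalso; have := hs.1; simp [hx] at this; omega
      · exact hs
    have hSwy : S w y := by
      rcases (adj_iff.mp hw2).2 with hs | hs
      · exact hs
      · exfalso; have := hs.1; simp [hy] at this; omega
    have hbit : ∀ i : Fin (e + 1), i ≠ 0 → w.2 i = c i := by
      intro i hi
      have := hSwx.2 i (by rw [hwlev]; exact fun hh => hi (Fin.ext (by simpa using hh)))
      simpa [hx] using this
    have hw0 : w.1 = (0 : Fin (e + 2)) := Fin.ext (by simpa using hwlev)
    rcases bool_eq_or (w.2 0) (c 0) with hb | hb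
    · have : w = ((0 : Fin (e + 2)), c) := by
        refine Prod.ext hw0 (funext fun i => ?_)
        by_cases hi : i = 0
        · rw [hi]; exact hb
        · exact hbit i hi
      rw [this] at hwc
      rcases hwc h1 with hh | hh
      · have := congrArg (fun w => ((w.1 : ℕ))) hh; simp [hx] at this
      · have := congrArg (fun w => ((w.1 : ℕ))) hh; simp [hy] at this
    · have : w = ((0 : Fin (e + 2)), c') := by
        refine Prod.ext hw0 (funext fun i => ?_)
        by_cases hi : i = 0
        · rw [hi, hb, hc']; simp
        · rw [hbit i hi]; simp [hc', Function.update_of_ne hi]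
      rw [this] at hwc
      rcases hwc h2 with hh | hh
      · have := congrArg (fun w => ((w.1 : ℕ))) hh; simp [hx] at this
      · have := congrArg (fun w => ((w.1 : ℕ))) hh; simp [hy] at this
  · -- middle at level 2 : impossible
    have he1 : 2 ≤ e + 1 := by have := w.1.isLt; omega
    have hSxw : S x w := by
      rcases (adj_iff.mp hw1).2 with hs | hs
      · exact hs
      · exfalso; have := hs.1; simp only [hx, Fin.val_mk] at this; omega
    have hSyw : S y w := by
      rcases (adj_iff.mp hw2).2 with hs | hs
      · exfalso; have := hs.1; simp only [hy, Fin.val_mk] at this; omega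
      · exact hs
    have hi0 : ((0 : Fin (e + 1)) : ℕ) ≠ ((⟨1, by omega⟩ : Fin (e + 2)) : ℕ) := by simp
    have e1 := hSxw.2 0 (by simpa [hx] using hi0)
    have e2 := hSyw.2 0 (by simpa [hy] using hi0)
    simp [hx] at e1
    simp [hy, hc', Function.update_self] at e2
    rw [← e1] at e2
    exact (Bool.eq_not_self _).mp e2
set_option maxHeartbeats 2000000 in
lemma pairLast {Y : Set (V e)} (hY : TotalMutualVisSet (BF (e + 1)) Y) (c : Fin (e + 1) → Bool)
    (h1 : (Fin.last (e + 1), c) ∈ Y)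
    (h2 : (Fin.last (e + 1), Function.update c (Fin.last e) (!c (Fin.last e))) ∈ Y) : False := by
  set c' : Fin (e + 1) → Bool := Function.update c (Fin.last e) (!c (Fin.last e)) with hc'
  set x : V e := (⟨e, by omega⟩, c) with hx
  set y : V e := (⟨e, by omega⟩, c') with hy
  have hA1 : (BF (e + 1)).Adj x (Fin.last (e + 1), c) :=
    adj_of_S ⟨by simp [hx], fun i hi => rfl⟩
  have hA2 : (BF (e + 1)).Adj y (Fin.last (e + 1), c) := by
    refine adj_of_S ⟨by simp [hy], fun i hi => ?_⟩
    have hne : i ≠ Fin.last e := by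
      intro hh; rw [hh] at hi; simp [hy] at hi
    simp [hy, hc', Function.update_of_ne hne]
  have hxy : x ≠ y := by
    intro hh
    have := congrArg (fun w => w.2 (Fin.last e)) hh
    simp [hx, hy, hc', Function.update_self] at this
  have hna : ¬ (BF (e + 1)).Adj x y := by
    intro hh
    rcases adj_level hh with hl | hl <;> simp [hx, hy] at hl
  obtain ⟨w, hw1, hw2, hwc⟩ := exists_middle hY (dist_eq_two hA1 hA2.symm hxy hna)
  have hwlev : (w.1 : ℕ) = e + 1 ∨ (w.1 : ℕ) + 1 = e := by
    rcases adj_level hw1 with hl | hl <;> simp [hx] at hl <;> omega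
  rcases hwlev with hwlev | hwlev
  · -- middle at the top level
    have hSxw : S x w := by
      rcases (adj_iff.mp hw1).2 with hs | hs
      · exact hs
      · exfalso; have := hs.1; simp [hx] at this; omega
    have hSyw : S y w := by
      rcases (adj_iff.mp hw2).2 with hs | hs
      · exfalso; have := hs.1; simp [hy] at this; omega
      · exact hs
    have hbit : ∀ i : Fin (e + 1), i ≠ Fin.last e → w.2 i = c i := by
      intro i hi
      have := hSxw.2 i (by
        simp [hx]
        exact fun hh => hi (Fin.ext (by simpa using hh)))
      simp [hx] at this
      exact this.symm
    have hw0 : w.1 = Fin.last (e + 1) := Fin.ext (by simpa using hwlev)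
    rcases bool_eq_or (w.2 (Fin.last e)) (c (Fin.last e)) with hb | hb
    · have : w = (Fin.last (e + 1), c) := by
        refine Prod.ext hw0 (funext fun i => ?_)
        by_cases hi : i = Fin.last e
        · rw [hi]; exact hb
        · exact hbit i hi
      rw [this] at hwc
      rcases hwc h1 with hh | hh
      · have := congrArg (fun w => ((w.1 : ℕ))) hh; simp [hx] at this
      · have := congrArg (fun w => ((w.1 : ℕ))) hh; simp [hy] at this
    · have : w = (Fin.last (e + 1), c') := by
        refine Prod.ext hw0 (funext fun i => ?_)
        by_cases hi : i = Fin.last e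
        · rw [hi, hb]; simp [hc']
        · rw [hbit i hi]; simp [hc', Function.update_of_ne hi]
      rw [this] at hwc
      rcases hwc h2 with hh | hh
      · have := congrArg (fun w => ((w.1 : ℕ))) hh; simp [hx] at this
      · have := congrArg (fun w => ((w.1 : ℕ))) hh; simp [hy] at this
  · -- middle below : impossible
    have hSwx : S w x := by
      rcases (adj_iff.mp hw1).2 with hs | hs
      · exfalso; have := hs.1; simp [hx] at this; omega
      · exact hs
    have hSwy : S w y := by
      rcases (adj_iff.mp hw2).2 with hs | hs
      · exact hs
      · exfalso; have := hs.1; simp [hy] at this; omega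
    have hilast : ((Fin.last e : Fin (e + 1)) : ℕ) ≠ (w.1 : ℕ) := by simp; omega
    have e1 := hSwx.2 (Fin.last e) hilast
    have e2 := hSwy.2 (Fin.last e) hilast
    simp [hx] at e1
    simp [hy, hc', Function.update_self] at e2
    rw [e1] at e2
    exact (Bool.eq_not_self _).mp e2
lemma inj_update_level {Y : Set (V e)} (hY : TotalMutualVisSet (BF (e + 1)) Y) :
    (Y ∩ {v | (v.1 : ℕ) = 0}).ncard ≤ 2 ^ e := by
  rw [← ncard_fixed0 (e := e)]
  refine Set.ncard_le_ncard_of_injOn (fun v => Function.update v.2 0 false) ?_ ?_ (Set.toFinite _)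
  · intro v hv
    simp [Function.update_self]
  · rintro u ⟨huY, hu0⟩ v ⟨hvY, hv0⟩ hEq
    simp only [Set.mem_setOf_eq] at hu0 hv0
    have hfst : u.1 = v.1 := Fin.ext (by rw [hu0, hv0])
    have hufst : u.1 = (0 : Fin (e + 2)) := Fin.ext (by simpa using hu0)
    have hvfst : v.1 = (0 : Fin (e + 2)) := Fin.ext (by simpa using hv0)
    by_cases hsnd : u.2 = v.2
    · exact Prod.ext hfst hsnd
    · exfalso
      have hbits : ∀ i : Fin (e + 1), i ≠ 0 → u.2 i = v.2 i := by
        intro i hi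
        have := congrFun hEq i
        simpa [Function.update_of_ne hi] using this
      have hb0 : v.2 0 = !u.2 0 := by
        rcases bool_eq_or (v.2 0) (u.2 0) with hb | hb
        · exfalso
          apply hsnd
          funext i
          by_cases hi : i = 0
          · rw [hi]; exact hb.symm
          · exact hbits i hi
        · exact hb
      have hv2 : v.2 = Function.update u.2 0 (!u.2 0) := by
        funext i
        by_cases hi : i = 0
        · rw [hi, Function.update_self]; exact hb0
        · rw [Function.update_of_ne hi]; exact (hbits i hi).symm
      apply pair0 hY u.2
      · have : ((0 : Fin (e + 2)), u.2) = u := by rw [← u.eta, hufst]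
        rw [this]; exact huY
      · have : ((0 : Fin (e + 2)), Function.update u.2 0 (!u.2 0)) = v := by
          rw [← v.eta, hvfst, hv2]
        rw [this]; exact hvY

lemma inj_update_levelLast {Y : Set (V e)} (hY : TotalMutualVisSet (BF (e + 1)) Y) :
    (Y ∩ {v | (v.1 : ℕ) = e + 1}).ncard ≤ 2 ^ e := by
  rw [← ncard_fixedlast (e := e)]
  refine Set.ncard_le_ncard_of_injOn (fun v => Function.update v.2 (Fin.last e) false) ?_ ?_
    (Set.toFinite _)
  · intro v hv
    simp [Function.update_self]
  · rintro u ⟨huY, hu0⟩ v ⟨hvY, hv0⟩ hEq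
    simp only [Set.mem_setOf_eq] at hu0 hv0
    have hfst : u.1 = v.1 := Fin.ext (by rw [hu0, hv0])
    have hufst : u.1 = Fin.last (e + 1) := Fin.ext (by simpa using hu0)
    have hvfst : v.1 = Fin.last (e + 1) := Fin.ext (by simpa using hv0)
    by_cases hsnd : u.2 = v.2
    · exact Prod.ext hfst hsnd
    · exfalso
      have hbits : ∀ i : Fin (e + 1), i ≠ Fin.last e → u.2 i = v.2 i := by
        intro i hi
        have := congrFun hEq i
        simpa [Function.update_of_ne hi] using this
      have hb0 : v.2 (Fin.last e) = !u.2 (Fin.last e) := by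
        rcases bool_eq_or (v.2 (Fin.last e)) (u.2 (Fin.last e)) with hb | hb
        · exfalso
          apply hsnd
          funext i
          by_cases hi : i = Fin.last e
          · rw [hi]; exact hb.symm
          · exact hbits i hi
        · exact hb
      have hv2 : v.2 = Function.update u.2 (Fin.last e) (!u.2 (Fin.last e)) := by
        funext i
        by_cases hi : i = Fin.last e
        · rw [hi, Function.update_self]; exact hb0
        · rw [Function.update_of_ne hi]; exact (hbits i hi).symm
      apply pairLast hY u.2
      · have : (Fin.last (e + 1), u.2) = u := by rw [← u.eta, hufst]
        rw [this]; exact huY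
      · have : (Fin.last (e + 1), Function.update u.2 (Fin.last e) (!u.2 (Fin.last e))) = v := by
          rw [← v.eta, hvfst, hv2]
        rw [this]; exact hvY

lemma tmvs_le {Y : Set (V e)} (hY : TotalMutualVisSet (BF (e + 1)) Y) :
    Y.ncard ≤ 2 ^ (e + 1) := by
  have hsub : Y ⊆ (Y ∩ {v | (v.1 : ℕ) = 0}) ∪ (Y ∩ {v | (v.1 : ℕ) = e + 1}) := by
    intro v hv
    rcases level_mem hY v hv with h | h
    · exact Or.inl ⟨hv, h⟩
    · exact Or.inr ⟨hv, h⟩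
  calc Y.ncard ≤ ((Y ∩ {v | (v.1 : ℕ) = 0}) ∪ (Y ∩ {v | (v.1 : ℕ) = e + 1})).ncard :=
        Set.ncard_le_ncard hsub (Set.toFinite _)
    _ ≤ (Y ∩ {v | (v.1 : ℕ) = 0}).ncard + (Y ∩ {v | (v.1 : ℕ) = e + 1}).ncard :=
        Set.ncard_union_le _ _
    _ ≤ 2 ^ e + 2 ^ e := add_le_add (inj_update_level hY) (inj_update_levelLast hY)
    _ = 2 ^ (e + 1) := by ring
end BFaux


/-- `μₜ(BF(d)) = 2^d` for all `d ≥ 1`. -/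
theorem totalMu_BF (d : ℕ) (hd : 1 ≤ d) :
    totalMutualVisNum (BF d) = 2 ^ d := by
  obtain ⟨e, rfl⟩ : ∃ e, d = e + 1 := ⟨d - 1, by omega⟩
  have hmem : 2 ^ (e + 1) ∈
      {n | ∃ X : Set (Fin (e + 1 + 1) × (Fin (e + 1) → Bool)),
        TotalMutualVisSet (BF (e + 1)) X ∧ X.ncard = n} :=
    ⟨BFaux.Xset e, BFaux.tmvs_Xset, BFaux.ncard_Xset⟩
  have hub : ∀ n ∈ {n | ∃ X : Set (Fin (e + 1 + 1) × (Fin (e + 1) → Bool)),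
      TotalMutualVisSet (BF (e + 1)) X ∧ X.ncard = n}, n ≤ 2 ^ (e + 1) := by
    rintro n ⟨X, hX, rfl⟩
    exact BFaux.tmvs_le hX
  exact le_antisymm (csSup_le ⟨_, hmem⟩ hub) (le_csSup ⟨2 ^ (e + 1), hub⟩ hmem)
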